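/- Let C' ⊆ C be a finite extension of commutative rings of characteristic p such that C^p ⊆ C' and the module of Kähler differentials Ω_{C/C'} is zero. Then C = C'. -/

import Mathlib

theorem stmt12 (p : ℕ) (hp : p.Prime) (C' C : Type*) [CommRing C'] [CommRing C]
    [CharP C p] [Algebra C' C] [Module.Finite C' C]
    (hsub : Function.Injective (algebraMap C' C))
    (hpow : ∀ x : C, ∃ y : C', algebraMap C' C y = x ^ p)
    (homega : Subsingleton (Ω[C⁄C'])) :
    Function.Surjective (algebraMap C' C) := by
  classical
  haveI : Fact p.Prime := ⟨hp⟩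
  have key : ∀ s : C, s ⊗ₜ[C'] (1 : C) = 1 ⊗ₜ[C'] s := by
    -- the ideal `I = ker (C ⊗ C → C)` is idempotent since `Ω = I/I²` vanishes
    have hI : IsIdempotentElem (KaehlerDifferential.ideal C' C) :=
      (Ideal.cotangent_subsingleton_iff _).mp homega
    obtain ⟨e, he, hIe⟩ := ((KaehlerDifferential.ideal C' C).isIdempotentElem_iff_of_fg
      (KaehlerDifferential.ideal_fg C' C)).mp hI
    -- every element of `I` is nilpotent
    have hnil : ∀ x ∈ KaehlerDifferential.ideal C' C, IsNilpotent x := by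
      intro x hx
      rw [← KaehlerDifferential.span_range_eq_ideal] at hx
      have hle : Ideal.span (Set.range fun s : C => (1 : C) ⊗ₜ[C'] s - s ⊗ₜ[C'] (1 : C)) ≤
          nilradical (TensorProduct C' C C) := by
        rw [Ideal.span_le]
        rintro _ ⟨s, rfl⟩
        rcases subsingleton_or_nontrivial (TensorProduct C' C C) with h | h
        · exact ⟨1, Subsingleton.elim _ _⟩
        · haveI : CharP (TensorProduct C' C C) p := by
            refine (CharP.charP_iff_prime_eq_zero hp).mpr ?_
            rw [← map_natCast (algebraMap C (TensorProduct C' C C)) p,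
              CharP.cast_eq_zero, map_zero]
          refine ⟨p, ?_⟩
          obtain ⟨y, hy⟩ := hpow s
          rw [sub_pow_char, Algebra.TensorProduct.tmul_pow, Algebra.TensorProduct.tmul_pow,
            one_pow, ← hy, Algebra.algebraMap_eq_smul_one, TensorProduct.smul_tmul, sub_self]
          exact zero_mem _
      exact hle hx
    -- hence the idempotent generator is zero and `I = ⊥`
    have he0 : e = 0 :=
      he.eq_zero_of_isNilpotent (hnil e (hIe ▸ Submodule.mem_span_singleton_self e))
    intro s
    have hs : (1 : C) ⊗ₜ[C'] s - s ⊗ₜ[C'] (1 : C) ∈ KaehlerDifferential.ideal C' C :=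
      KaehlerDifferential.one_smul_sub_smul_one_mem_ideal _ _
    rw [hIe, he0, Submodule.span_zero_singleton, Submodule.mem_bot, sub_eq_zero] at hs
    exact hs.symm
  exact RingHom.surjective_of_tmul_eq_tmul_of_finite.mp
    ((Algebra.isEpi_iff_forall_one_tmul_eq C' C).mpr fun a => (key a).symm)
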